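/- Let ψ be a unit-speed curve in ℝ³ with constant nonzero curvature κ and non-constant torsion τ. Then ψ is a slant helix (i.e. there is a fixed unit vector U with ⟨N(s), U⟩ constant, where N = κn is the modified-frame normal) if and only if the function τ'/(κ² + τ²)^{3/2} is constant. -/

import Mathlib

open scoped RealInnerProductSpace

/-- A function with zero derivative on an open interval is constant there. -/
lemma constOn {E : Type*} [NormedAddCommGroup E] [NormedSpace ℝ E]
    {f : ℝ → E} {a b : ℝ} (h : ∀ s ∈ Set.Ioo a b, HasDerivAt f 0 s)
    {x y : ℝ} (hx : x ∈ Set.Ioo a b) (hy : y ∈ Set.Ioo a b) : f x = f y := by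
  have hdiff : DifferentiableOn ℝ f (Set.Ioo a b) := fun s hs =>
    ((h s hs).differentiableAt).differentiableWithinAt
  refine (convex_Ioo a b).is_const_of_fderivWithin_eq_zero hdiff (fun s hs => ?_) hx hy
  have := ((h s hs).hasFDerivAt.hasFDerivWithinAt (s := Set.Ioo a b)).fderivWithin
    (isOpen_Ioo.uniqueDiffOn s hs)
  rw [this]
  ext
  simp

/-- Two functions equal on an open interval have equal derivatives there. -/
lemma derivEqOn {E : Type*} [NormedAddCommGroup E] [NormedSpace ℝ E]
    {f g : ℝ → E} {f' g' : E} {a b s : ℝ} (hs : s ∈ Set.Ioo a b)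
    (hfg : ∀ t ∈ Set.Ioo a b, f t = g t)
    (hf : HasDerivAt f f' s) (hg : HasDerivAt g g' s) : f' = g' := by
  have heq : f =ᶠ[nhds s] g :=
    Filter.eventuallyEq_of_mem (isOpen_Ioo.mem_nhds hs) hfg
  exact (hf.congr_of_eventuallyEq heq.symm).unique hg

/-- If a vector is orthogonal to three orthonormal-type vectors in ℝ³, it is zero. -/
lemma orth_three {v₁ v₂ v₃ U : EuclideanSpace ℝ (Fin 3)}
    (h11 : ⟪v₁, v₁⟫ = 1) (h22 : ⟪v₂, v₂⟫ = 1) (h33 : ⟪v₃, v₃⟫ = 1)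
    (h12 : ⟪v₁, v₂⟫ = 0) (h13 : ⟪v₁, v₃⟫ = 0) (h23 : ⟪v₂, v₃⟫ = 0)
    (hU1 : ⟪v₁, U⟫ = 0) (hU2 : ⟪v₂, U⟫ = 0) (hU3 : ⟪v₃, U⟫ = 0) : U = 0 := by
  set e : Fin 3 → EuclideanSpace ℝ (Fin 3) := ![v₁, v₂, v₃] with he
  have h21 : ⟪v₂, v₁⟫ = 0 := by rw [real_inner_comm]; exact h12
  have h31 : ⟪v₃, v₁⟫ = 0 := by rw [real_inner_comm]; exact h13
  have h32 : ⟪v₃, v₂⟫ = 0 := by rw [real_inner_comm]; exact h23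
  have n1 : ‖v₁‖ = 1 := by
    have := norm_nonneg v₁; rw [real_inner_self_eq_norm_sq] at h11; nlinarith
  have n2 : ‖v₂‖ = 1 := by
    have := norm_nonneg v₂; rw [real_inner_self_eq_norm_sq] at h22; nlinarith
  have n3 : ‖v₃‖ = 1 := by
    have := norm_nonneg v₃; rw [real_inner_self_eq_norm_sq] at h33; nlinarith
  have honb : Orthonormal ℝ e := by
    rw [orthonormal_iff_ite]
    intro i j
    fin_cases i <;> fin_cases j <;>
      norm_num [he, Matrix.cons_val_zero, Matrix.cons_val_one, Matrix.head_cons,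
        Matrix.cons_val_two, Matrix.tail_cons, h11, h22, h33, h12, h13, h23, h21, h31, h32, Fin.ext_iff, n1, n2, n3]
  have hspan : Submodule.span ℝ (Set.range e) = ⊤ :=
    honb.linearIndependent.span_eq_top_of_card_eq_finrank
      (by simp [finrank_euclideanSpace_fin])
  have hmem : U ∈ (Submodule.span ℝ (Set.range e))ᗮ := by
    rw [Submodule.mem_orthogonal]
    intro v hv
    induction hv using Submodule.span_induction with
    | mem x hx =>
      obtain ⟨i, rfl⟩ := hx
      fin_cases i <;> simpa [he] using (by assumption)
    | zero => simp
    | add x y _ _ hx hy => rw [inner_add_left, hx, hy, add_zero]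
    | smul c x _ hx => rw [inner_smul_left, hx, mul_zero]
  rw [hspan, Submodule.top_orthogonal_eq_bot, Submodule.mem_bot] at hmem
  exact hmem

/-- A unit speed curve with constant nonzero curvature `κ` and non-constant torsion `τ` is a
slant helix (its modified-frame normal `N` makes a constant inner product with some fixed
nonzero vector) if and only if `τ'/(κ² + τ²)^{3/2}` is constant. -/
theorem slant_helix_iff
    (a b : ℝ) (hab : a < b)
    (ψ T N B : ℝ → EuclideanSpace ℝ (Fin 3)) (κ : ℝ) (τ τ' : ℝ → ℝ)
    (hκ0 : κ ≠ 0)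
    (hτnonconst : ¬ ∃ c : ℝ, ∀ s ∈ Set.Ioo a b, τ s = c)
    (hψ : ∀ s ∈ Set.Ioo a b, HasDerivAt ψ (T s) s)
    (hunit : ∀ s ∈ Set.Ioo a b, ‖T s‖ = 1)
    (hT : ∀ s ∈ Set.Ioo a b, HasDerivAt T (N s) s)
    (hN : ∀ s ∈ Set.Ioo a b, HasDerivAt N (-(κ ^ 2) • T s + τ s • B s) s)
    (hB : ∀ s ∈ Set.Ioo a b, HasDerivAt B (-τ s • N s) s)
    (hτ : ∀ s ∈ Set.Ioo a b, HasDerivAt τ (τ' s) s)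
    (hNN : ∀ s ∈ Set.Ioo a b, ⟪N s, N s⟫ = κ ^ 2)
    (hBB : ∀ s ∈ Set.Ioo a b, ⟪B s, B s⟫ = κ ^ 2)
    (hTN : ∀ s ∈ Set.Ioo a b, ⟪T s, N s⟫ = 0)
    (hTB : ∀ s ∈ Set.Ioo a b, ⟪T s, B s⟫ = 0)
    (hNB : ∀ s ∈ Set.Ioo a b, ⟪N s, B s⟫ = 0) :
    (∃ U : EuclideanSpace ℝ (Fin 3), U ≠ 0 ∧ ∃ c : ℝ, ∀ s ∈ Set.Ioo a b, ⟪N s, U⟫ = c) ↔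
      (∃ c : ℝ, ∀ s ∈ Set.Ioo a b, τ' s / (κ ^ 2 + τ s ^ 2) ^ ((3 : ℝ) / 2) = c) := by
  have hs₀ : (a + b) / 2 ∈ Set.Ioo a b := ⟨by linarith, by linarith⟩
  set s₀ : ℝ := (a + b) / 2 with hs₀def
  have hmpos : ∀ s : ℝ, 0 < κ ^ 2 + τ s ^ 2 := fun s => by positivity
  have hsqpos : ∀ s : ℝ, 0 < Real.sqrt (κ ^ 2 + τ s ^ 2) := fun s =>
    Real.sqrt_pos.2 (hmpos s)
  have hmsq : ∀ s : ℝ, Real.sqrt (κ ^ 2 + τ s ^ 2) ^ 2 = κ ^ 2 + τ s ^ 2 := fun s =>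
    Real.sq_sqrt (hmpos s).le
  have h32 : ∀ s : ℝ, (κ ^ 2 + τ s ^ 2) ^ ((3 : ℝ) / 2) =
      (κ ^ 2 + τ s ^ 2) * Real.sqrt (κ ^ 2 + τ s ^ 2) := by
    intro s
    rw [show ((3 : ℝ) / 2) = 1 + 1 / 2 by norm_num, Real.rpow_add (hmpos s),
      Real.rpow_one, ← Real.sqrt_eq_rpow]
  -- derivative of m := κ² + τ²
  have hm' : ∀ s ∈ Set.Ioo a b, HasDerivAt (fun t => κ ^ 2 + τ t ^ 2)
      (2 * τ s * τ' s) s := by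
    intro s hs
    have := (hasDerivAt_const s (κ ^ 2)).add ((hτ s hs).pow 2)
    exact this.congr_deriv (by rw [show (2:ℕ) - 1 = 1 from rfl]; push_cast; ring)
  constructor
  · -- forward direction
    rintro ⟨U, hU0, c, hc⟩
    set u : ℝ → ℝ := fun s => ⟪T s, U⟫ with hu_def
    set w : ℝ → ℝ := fun s => ⟪B s, U⟫ with hw_def
    have hdu : ∀ s ∈ Set.Ioo a b, HasDerivAt u c s := by
      intro s hs
      have := (hT s hs).inner ℝ (hasDerivAt_const s U)
      simpa [hc s hs] using this
    have hdv : ∀ s ∈ Set.Ioo a b, HasDerivAt (fun t => ⟪N t, U⟫)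
        (-(κ ^ 2) * u s + τ s * w s) s := by
      intro s hs
      have h := (hN s hs).inner ℝ (hasDerivAt_const s U)
      refine h.congr_deriv (Eq.symm ?_)
      rw [inner_zero_right, zero_add, inner_add_left, real_inner_smul_left,
        real_inner_smul_left]
    have hvc : ∀ s ∈ Set.Ioo a b, -(κ ^ 2) * u s + τ s * w s = 0 := by
      intro s hs
      exact derivEqOn hs (fun t ht => hc t ht) (hdv s hs) (hasDerivAt_const s c)
    have hdw : ∀ s ∈ Set.Ioo a b, HasDerivAt w (-(τ s * c)) s := by
      intro s hs
      have h := (hB s hs).inner ℝ (hasDerivAt_const s U)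
      refine h.congr_deriv (Eq.symm ?_)
      rw [inner_zero_right, zero_add, real_inner_smul_left, hc s hs]
      ring
    have hstar : ∀ s ∈ Set.Ioo a b, τ' s * w s = c * (κ ^ 2 + τ s ^ 2) := by
      intro s hs
      have hL : HasDerivAt (fun t => κ ^ 2 * u t) (κ ^ 2 * c) s :=
        (hdu s hs).const_mul (κ ^ 2)
      have hR : HasDerivAt (fun t => τ t * w t)
          (τ' s * w s + τ s * -(τ s * c)) s := (hτ s hs).mul (hdw s hs)
      have heq := derivEqOn hs (fun t ht => by have := hvc t ht; nlinarith [this]) hL hR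
      linear_combination -heq
    by_cases hc0 : c = 0
    · -- c = 0 : derive a contradiction
      exfalso
      subst hc0
      have hdu0 : ∀ s ∈ Set.Ioo a b, HasDerivAt u 0 s := fun s hs => hdu s hs
      have hdw0 : ∀ s ∈ Set.Ioo a b, HasDerivAt w 0 s := fun s hs => by
        simpa using hdw s hs
      by_cases hw0 : w s₀ = 0
      · -- U orthogonal to the frame ⇒ U = 0
        have hwall : ∀ s ∈ Set.Ioo a b, w s = 0 := fun s hs =>
          (constOn hdw0 hs hs₀).trans hw0
        have huall : ∀ s ∈ Set.Ioo a b, u s = 0 := by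
          intro s hs
          have := hvc s hs
          rw [hwall s hs] at this
          have hκ2 : (κ : ℝ) ^ 2 ≠ 0 := pow_ne_zero 2 hκ0
          have h0 : κ ^ 2 * u s = 0 := by linarith
          exact (mul_eq_zero.1 h0).resolve_left hκ2
        apply hU0
        refine orth_three (v₁ := T s₀) (v₂ := κ⁻¹ • N s₀) (v₃ := κ⁻¹ • B s₀)
          ?_ ?_ ?_ ?_ ?_ ?_ ?_ ?_ ?_
        · rw [real_inner_self_eq_norm_sq, hunit s₀ hs₀]; norm_num
        · rw [real_inner_smul_left, real_inner_smul_right, hNN s₀ hs₀]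
          field_simp
        · rw [real_inner_smul_left, real_inner_smul_right, hBB s₀ hs₀]
          field_simp
        · rw [real_inner_smul_right, hTN s₀ hs₀, mul_zero]
        · rw [real_inner_smul_right, hTB s₀ hs₀, mul_zero]
        · rw [real_inner_smul_left, real_inner_smul_right, hNB s₀ hs₀]
          simp
        · exact huall s₀ hs₀
        · rw [real_inner_smul_left, hc s₀ hs₀, mul_zero]
        · have hwz := hwall s₀ hs₀
          simp only [hw_def] at hwz
          rw [real_inner_smul_left, hwz, mul_zero]
      · -- w ≠ 0 ⇒ τ constant, contradiction
        apply hτnonconst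
        refine ⟨κ ^ 2 * u s₀ / w s₀, fun s hs => ?_⟩
        have hws : w s = w s₀ := constOn hdw0 hs hs₀
        have hus : u s = u s₀ := constOn hdu0 hs hs₀
        have := hvc s hs
        rw [hws, hus] at this
        field_simp
        linarith [this]
    · -- c ≠ 0
      have hwne : ∀ s ∈ Set.Ioo a b, w s ≠ 0 := by
        intro s hs hw
        have hst := hstar s hs
        rw [hw, mul_zero] at hst
        exact mul_ne_zero hc0 (hmpos s).ne' hst.symm
      have hdg : ∀ s ∈ Set.Ioo a b,
          HasDerivAt (fun t => w t * Real.sqrt (κ ^ 2 + τ t ^ 2)) 0 s := by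
        intro s hs
        have hsq : HasDerivAt (fun t => Real.sqrt (κ ^ 2 + τ t ^ 2))
            (2 * τ s * τ' s / (2 * Real.sqrt (κ ^ 2 + τ s ^ 2))) s :=
          (hm' s hs).sqrt (hmpos s).ne'
        have := (hdw s hs).mul hsq
        refine this.congr_deriv (Eq.symm ?_)
        have h1 := (hsqpos s).ne'
        have h2 := hmsq s
        have h3 := hstar s hs
        field_simp
        linear_combination τ s * c * h2 - τ s * h3
      have hd0 : w s₀ * Real.sqrt (κ ^ 2 + τ s₀ ^ 2) ≠ 0 :=
        mul_ne_zero (hwne s₀ hs₀) (hsqpos s₀).ne'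
      refine ⟨c / (w s₀ * Real.sqrt (κ ^ 2 + τ s₀ ^ 2)), fun s hs => ?_⟩
      have hg : w s * Real.sqrt (κ ^ 2 + τ s ^ 2)
          = w s₀ * Real.sqrt (κ ^ 2 + τ s₀ ^ 2) := constOn hdg hs hs₀
      rw [h32 s, div_eq_div_iff (by positivity) hd0]
      linear_combination Real.sqrt (κ ^ 2 + τ s ^ 2) * hstar s hs - τ' s * hg
  · -- converse direction
    rintro ⟨c, hc⟩
    have hτ' : ∀ s ∈ Set.Ioo a b,
        τ' s = c * ((κ ^ 2 + τ s ^ 2) * Real.sqrt (κ ^ 2 + τ s ^ 2)) := by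
      intro s hs
      have := hc s hs
      rw [h32 s, div_eq_iff (by positivity)] at this
      linarith [this]
    have hc0 : c ≠ 0 := by
      intro h0
      apply hτnonconst
      refine ⟨τ s₀, fun s hs => ?_⟩
      refine constOn (f := τ) (fun t ht => ?_) hs hs₀
      have := hτ t ht
      rw [hτ' t ht, h0, zero_mul] at this
      exact this
    set u : ℝ → ℝ := fun s => τ s / (κ ^ 2 * Real.sqrt (κ ^ 2 + τ s ^ 2)) with hu_def
    set w : ℝ → ℝ := fun s => (Real.sqrt (κ ^ 2 + τ s ^ 2))⁻¹ with hw_def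
    set Uf : ℝ → EuclideanSpace ℝ (Fin 3) :=
      fun s => u s • T s + (c / κ ^ 2) • N s + (w s / κ ^ 2) • B s with hUf_def
    have hdsq : ∀ s ∈ Set.Ioo a b, HasDerivAt (fun t => Real.sqrt (κ ^ 2 + τ t ^ 2))
        (τ s * τ' s / Real.sqrt (κ ^ 2 + τ s ^ 2)) s := by
      intro s hs
      have := (hm' s hs).sqrt (hmpos s).ne'
      convert this using 1
      have h1 := (hsqpos s).ne'
      field_simp
    have hdw : ∀ s ∈ Set.Ioo a b, HasDerivAt w (-(τ s * c)) s := by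
      intro s hs
      have := (hdsq s hs).inv (hsqpos s).ne'
      refine this.congr_deriv (Eq.symm ?_)
      have h1 := (hsqpos s).ne'
      have h2 := hmsq s
      rw [hτ' s hs]
      field_simp
      linear_combination -τ s * h2
    have hdu : ∀ s ∈ Set.Ioo a b, HasDerivAt u c s := by
      intro s hs
      have hden : HasDerivAt (fun t => κ ^ 2 * Real.sqrt (κ ^ 2 + τ t ^ 2))
          (κ ^ 2 * (τ s * τ' s / Real.sqrt (κ ^ 2 + τ s ^ 2))) s :=
        (hdsq s hs).const_mul (κ ^ 2)
      have hdenne : κ ^ 2 * Real.sqrt (κ ^ 2 + τ s ^ 2) ≠ 0 := by positivity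
      have := (hτ s hs).div hden hdenne
      refine this.congr_deriv (Eq.symm ?_)
      have h1 := (hsqpos s).ne'
      have h2 := hmsq s
      rw [hτ' s hs]
      field_simp
      linear_combination -τ s ^ 2 * h2
    have hdUf : ∀ s ∈ Set.Ioo a b, HasDerivAt Uf 0 s := by
      intro s hs
      have h1 : HasDerivAt (fun t => u t • T t) (u s • N s + c • T s) s :=
        (hdu s hs).smul (hT s hs)
      have h2 : HasDerivAt (fun t => (c / κ ^ 2) • N t)
          ((c / κ ^ 2) • (-(κ ^ 2) • T s + τ s • B s)) s :=
        (hN s hs).const_smul (c / κ ^ 2)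
      have h3 : HasDerivAt (fun t => (w t / κ ^ 2) • B t)
          ((w s / κ ^ 2) • (-τ s • N s) + (-(τ s * c) / κ ^ 2) • B s) s :=
        ((hdw s hs).div_const (κ ^ 2)).smul (hB s hs)
      have htot := (h1.add h2).add h3
      refine htot.congr_deriv (Eq.symm ?_)
      have h4 := (hsqpos s).ne'
      symm
      match_scalars <;> (try simp only [hu_def, hw_def]) <;> field_simp <;> try ring
    have hinner : ∀ s ∈ Set.Ioo a b, ⟪N s, Uf s⟫ = c := by
      intro s hs
      simp only [hUf_def, inner_add_right, real_inner_smul_right]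
      rw [real_inner_comm (T s) (N s), hTN s hs, hNN s hs, hNB s hs]
      field_simp
      ring
    refine ⟨Uf s₀, fun h0 => hc0 ?_, c, fun s hs => ?_⟩
    · have := hinner s₀ hs₀
      rw [h0, inner_zero_right] at this
      exact this.symm
    · rw [constOn hdUf hs₀ hs]
      exact hinner s hs
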